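/- If p is a real polynomial of degree n ≥ 1 with only real zeroes, then for every real x, p(x)·p''(x) − ((n−1)/n)·(p'(x))² ≤ 0. -/

import Mathlib

open Polynomial

lemma newton_key (s : Multiset ℝ) (c : ℝ) (x : ℝ) (hs : 1 ≤ Multiset.card s) :
    (C c * (s.map fun r => X - C r).prod).eval x *
        (derivative (derivative (C c * (s.map fun r => X - C r).prod))).eval x
      - ((Multiset.card s : ℝ) - 1) / (Multiset.card s) *
        ((derivative (C c * (s.map fun r => X - C r).prod)).eval x) ^ 2 ≤ 0 := by
  induction s using Multiset.induction generalizing c with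
  | empty => simp at hs
  | cons r t ih =>
    rcases Multiset.empty_or_exists_mem t with hT | hT
    · subst hT
      simp [derivative_mul]
    · have hm : 1 ≤ Multiset.card t := by
        obtain ⟨a, ha⟩ := hT
        exact Multiset.card_pos.mpr (fun h => by simp [h] at ha)
      set q : ℝ[X] := C c * (t.map fun r => X - C r).prod with hq
      have hp : C c * ((r ::ₘ t).map fun r => X - C r).prod = (X - C r) * q := by
        rw [Multiset.map_cons, Multiset.prod_cons, hq]; ring
      have hd1 : derivative ((X - C r) * q) = q + (X - C r) * derivative q := by
        simp [derivative_mul]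
      have hd2 : derivative (derivative ((X - C r) * q))
          = 2 * derivative q + (X - C r) * derivative (derivative q) := by
        rw [hd1]; simp [derivative_mul]; ring
      rw [hp, hd2, hd1]
      have IH := ih c hm
      set m : ℝ := (Multiset.card t : ℝ) with hmdef
      have hm0 : (1:ℝ) ≤ m := by rw [hmdef]; exact_mod_cast hm
      set Q := q.eval x
      set Q1 := (derivative q).eval x
      set Q2 := (derivative (derivative q)).eval x
      simp only [eval_mul, eval_add, eval_sub, eval_X, eval_C, eval_ofNat,
        Multiset.card_cons, Nat.cast_add, Nat.cast_one]
      have h2 : m*(Q*Q2) ≤ (m-1)*Q1^2 := by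
        have := mul_le_mul_of_nonneg_left (by linarith [IH] : Q*Q2 ≤ (m-1)/m*Q1^2)
          (by linarith : (0:ℝ) ≤ m)
        calc m*(Q*Q2) ≤ m*((m-1)/m*Q1^2) := this
          _ = (m-1)*Q1^2 := by field_simp
      have h3 : m*((x-r)^2*(Q*Q2)) ≤ (m-1)*((x-r)^2*Q1^2) := by
        nlinarith [sq_nonneg (x-r)]
      have hnum : (m+1)*((x-r)*Q*(2*Q1+(x-r)*Q2)) - m*(Q+(x-r)*Q1)^2 ≤ 0 := by
        nlinarith [h3, sq_nonneg (m*Q - (x-r)*Q1)]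
      have heq : (x-r)*Q*(2*Q1+(x-r)*Q2) - (m+1-1)/(m+1)*(Q+(x-r)*Q1)^2
          = ((m+1)*((x-r)*Q*(2*Q1+(x-r)*Q2)) - m*(Q+(x-r)*Q1)^2)/(m+1) := by
        field_simp; ring
      calc (x-r)*Q*(2*Q1+(x-r)*Q2) - (m+1-1)/(m+1)*(Q+(x-r)*Q1)^2
          = ((m+1)*((x-r)*Q*(2*Q1+(x-r)*Q2)) - m*(Q+(x-r)*Q1)^2)/(m+1) := heq
        _ ≤ 0 := div_nonpos_of_nonpos_of_nonneg hnum (by linarith)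

/-- **Differential form of the Newton inequality.** If `p` is a real polynomial of
degree `n ≥ 1` with only real zeroes, then for every real `x`,
`p(x)·p''(x) − ((n−1)/n)·(p'(x))² ≤ 0`. -/
theorem newton_inequality_differential (p : ℝ[X]) (n : ℕ) (hn : p.natDegree = n)
    (hn1 : 1 ≤ n)
    (hreal : ∀ z : ℂ, (p.map (algebraMap ℝ ℂ)).IsRoot z → z.im = 0) :
    ∀ x : ℝ,
      p.eval x * (derivative (derivative p)).eval x
        - ((n : ℝ) - 1) / n * ((derivative p).eval x) ^ 2 ≤ 0 := by
  intro x
  have hp0 : p ≠ 0 := fun h => by simp [h] at hn; omega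
  have hsplit : Splits p := by
    apply Splits.of_splits_map (algebraMap ℝ ℂ) (IsAlgClosed.splits _)
    intro a ha
    have him : a.im = 0 := hreal a (isRoot_of_mem_roots ha)
    exact ⟨a.re, (Complex.ext (by simp) (by simp [him])).symm⟩
  have hcard : Multiset.card p.roots = n := by
    rw [splits_iff_card_roots.mp hsplit, hn]
  have hrepr := hsplit.eq_prod_roots
  have key := newton_key p.roots p.leadingCoeff x (by omega)
  rw [hcard, ← hrepr] at key
  exact key
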